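/- arXiv:1804.10200 — 3 statements merged into one kernel-verified Lean document; each statement's English description precedes it below -/
import Mathlib

section
/- Let σ : ℝ → ℝ be a rectified function, i.e., σ(x) = 0 for x ≤ 0 and σ(x) > 0 and σ strictly increasing for x > 0. Let t_1 < t_2 < ... < t_d be real numbers and set b_j = (t_{j-1} + t_j)/2 for j = 1, ..., d (with t_0 := t_1 - 1). Then the d×d matrix A with entries A_{ij} = σ(t_i - b_j) is lower triangular with nonzero diagonal entries, hence invertible. -/
theorem stmt_5 (d : ℕ) (σ : ℝ → ℝ) (hσcont : Continuous σ)
    (hσ0 : ∀ x : ℝ, x ≤ 0 → σ x = 0)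
    (hσmono : StrictMonoOn σ (Set.Ioi 0))
    (hσpos : ∀ x : ℝ, 0 < x → 0 < σ x)
    (t : Fin d → ℝ) (ht : StrictMono t)
    (b : Fin d → ℝ)
    (hb : ∀ j : Fin d, b j =
      ((if (j : ℕ) = 0 then t j - 1
        else t ⟨(j : ℕ) - 1, lt_of_le_of_lt (Nat.sub_le _ _) j.isLt⟩) + t j) / 2) :
    (∀ i j : Fin d, i < j → Matrix.of (fun i j => σ (t i - b j)) i j = 0) ∧
    (∀ i : Fin d, Matrix.of (fun i j => σ (t i - b j)) i i ≠ 0) ∧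
    IsUnit (Matrix.of (fun i j : Fin d => σ (t i - b j))) := by
  -- key fact: b j < t j
  have hblt : ∀ j : Fin d, b j < t j := by
    intro j
    rw [hb j]
    split_ifs with h
    · linarith
    · have : t ⟨(j : ℕ) - 1, lt_of_le_of_lt (Nat.sub_le _ _) j.isLt⟩ < t j := by
        apply ht
        simp only [Fin.mk_lt_mk, Fin.lt_def]
        omega
      linarith
  -- for i < j, t i ≤ b j
  have hupper : ∀ i j : Fin d, i < j → t i - b j ≤ 0 := by
    intro i j hij
    have hj0 : (j : ℕ) ≠ 0 := by
      intro h
      exact absurd hij (by simp [Fin.lt_def, h])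
    rw [hb j]
    simp only [hj0, if_false]
    have h1 : t i ≤ t ⟨(j : ℕ) - 1, lt_of_le_of_lt (Nat.sub_le _ _) j.isLt⟩ := by
      apply ht.monotone
      simp only [Fin.le_def]
      have := hij
      rw [Fin.lt_def] at this
      omega
    have h2 : t ⟨(j : ℕ) - 1, lt_of_le_of_lt (Nat.sub_le _ _) j.isLt⟩ < t j := by
      apply ht
      simp only [Fin.lt_def]
      omega
    linarith
  have hzero : ∀ i j : Fin d, i < j → Matrix.of (fun i j => σ (t i - b j)) i j = 0 := by
    intro i j hij
    exact hσ0 _ (hupper i j hij)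
  have hdiag : ∀ i : Fin d, Matrix.of (fun i j => σ (t i - b j)) i i ≠ 0 := by
    intro i
    exact ne_of_gt (hσpos _ (by linarith [hblt i]))
  refine ⟨hzero, hdiag, ?_⟩
  rw [Matrix.isUnit_iff_isUnit_det,
    Matrix.det_of_lowerTriangular _ (fun i j h => hzero i j h)]
  exact (Finset.prod_ne_zero_iff.mpr fun i _ => hdiag i).isUnit
end

section
/- Let σ : ℝ → ℝ be rectified (σ(x) = 0 for x ≤ 0, σ strictly increasing and positive on (0,∞)). Given distinct points x_1, ..., x_d ∈ ℝ^p and arbitrary values y_1, ..., y_d ∈ ℝ, there exist a ∈ ℝ^p, b_1, ..., b_d ∈ ℝ, and m_1, ..., m_d ∈ ℝ such that for every i, Σ_{j=1}^d m_j σ(a·x_i − b_j) = y_i. That is, a one-hidden-layer neural network of width d with activation σ can interpolate any d data points with distinct inputs exactly. -/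
theorem stmt_6 (d p : ℕ) (σ : ℝ → ℝ) (hσcont : Continuous σ)
    (hσ0 : ∀ x : ℝ, x ≤ 0 → σ x = 0)
    (hσmono : StrictMonoOn σ (Set.Ioi 0))
    (hσpos : ∀ x : ℝ, 0 < x → 0 < σ x)
    (x : Fin d → (Fin p → ℝ)) (hx : Function.Injective x)
    (y : Fin d → ℝ) :
    ∃ (a : Fin p → ℝ) (b m : Fin d → ℝ),
      ∀ i : Fin d, ∑ j : Fin d, m j * σ (dotProduct a (x i) - b j) = y i := by
  classical
  -- Step 1: find a with injective projections
  have hker : ∀ v : Fin p → ℝ, v ≠ 0 →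
      (Submodule.span ℝ {0} : Submodule ℝ (Fin p → ℝ)) ≤ ⊤ := fun _ _ => le_top
  -- linear functional a ↦ a ⬝ v
  let f : (Fin p → ℝ) → (Fin p → ℝ) →ₗ[ℝ] ℝ := fun v =>
    { toFun := fun a => dotProduct a v
      map_add' := fun a b => add_dotProduct a b v
      map_smul' := fun r a => smul_dotProduct r a v }
  have hfker : ∀ v : Fin p → ℝ, v ≠ 0 → LinearMap.ker (f v) ≠ ⊤ := by
    intro v hv h
    have : f v v = 0 := by
      have : v ∈ LinearMap.ker (f v) := h ▸ Submodule.mem_top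
      simpa using this
    have hvv : dotProduct v v = 0 := this
    exact hv (dotProduct_self_eq_zero.mp hvv)
  obtain ⟨a, ha⟩ : ∃ a : Fin p → ℝ, ∀ q : {q : Fin d × Fin d // q.1 ≠ q.2},
      dotProduct a (x q.1.1 - x q.1.2) ≠ 0 := by
    by_contra h
    push_neg at h
    have hcov : ⋃ q : {q : Fin d × Fin d // q.1 ≠ q.2},
        ((LinearMap.ker (f (x q.1.1 - x q.1.2)) : Submodule ℝ (Fin p → ℝ)) : Set (Fin p → ℝ))
          = Set.univ := by
      ext a
      simp only [Set.mem_iUnion, Set.mem_univ, iff_true, SetLike.mem_coe, LinearMap.mem_ker]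
      obtain ⟨q, hq⟩ := h a
      exact ⟨q, hq⟩
    obtain ⟨q, hq⟩ := Subspace.exists_eq_top_of_iUnion_eq_univ hcov
    exact hfker _ (fun h0 => q.2 (hx (sub_eq_zero.mp h0))) hq
  set c : Fin d → ℝ := fun i => dotProduct a (x i) with hc
  have hcinj : Function.Injective c := by
    intro i j hij
    by_contra hne
    apply ha ⟨(i, j), hne⟩
    simp only [dotProduct_sub]
    exact sub_eq_zero.mpr hij
  -- Step 2: gap ε
  set gaps : Finset ℝ :=
    insert 1 ((Finset.univ.filter (fun q : Fin d × Fin d => c q.1 < c q.2)).image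
      (fun q => c q.2 - c q.1)) with hgaps
  have hne : gaps.Nonempty := ⟨1, Finset.mem_insert_self _ _⟩
  set ε : ℝ := gaps.min' hne with hε
  have hεpos : 0 < ε := by
    apply (Finset.lt_min'_iff gaps hne).2
    intro z hz
    rcases Finset.mem_insert.mp hz with h1 | h2
    · simp [h1]
    · obtain ⟨q, hq, rfl⟩ := Finset.mem_image.mp h2
      have := (Finset.mem_filter.mp hq).2
      linarith
  have hεle : ∀ i j : Fin d, c i < c j → ε ≤ c j - c i := by
    intro i j hij
    apply Finset.min'_le
    exact Finset.mem_insert.mpr (Or.inr (Finset.mem_image.mpr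
      ⟨(i, j), Finset.mem_filter.mpr ⟨Finset.mem_univ _, hij⟩, rfl⟩))
  -- Step 3: matrix
  set b : Fin d → ℝ := fun j => c j - ε with hb
  set M : Matrix (Fin d) (Fin d) ℝ := fun i j => σ (c i - b j) with hM
  have hMzero : ∀ i j : Fin d, c i < c j → M i j = 0 := by
    intro i j hij
    apply hσ0
    have := hεle i j hij
    simp only [hb]
    linarith
  -- sort
  let e := Tuple.sort c
  have hmono : StrictMono (c ∘ e) :=
    (Tuple.monotone_sort c).strictMono_of_injective (hcinj.comp e.injective)
  set N : Matrix (Fin d) (Fin d) ℝ := M.submatrix e e with hN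
  have hNdet : N.det = σ ε ^ d := by
    rw [Matrix.det_of_lowerTriangular N (fun i j hij => hMzero (e i) (e j) (hmono hij))]
    have : ∀ i : Fin d, N i i = σ ε := by
      intro i
      simp only [hN, Matrix.submatrix_apply, hM, hb, Matrix.submatrix, Matrix.of_apply]
      ring_nf
    rw [Finset.prod_congr rfl (fun i _ => this i)]
    simp
  have hMdet : IsUnit M.det := by
    have : M.det = σ ε ^ d := by
      rw [← hNdet, hN, Matrix.det_submatrix_equiv_self]
    rw [this]
    exact (pow_ne_zero d (ne_of_gt (hσpos ε hεpos))).isUnit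
  refine ⟨a, b, M⁻¹.mulVec y, fun i => ?_⟩
  have : M.mulVec (M⁻¹.mulVec y) = y := by
    rw [Matrix.mulVec_mulVec, Matrix.mul_nonsing_inv _ hMdet, Matrix.one_mulVec]
  have hi := congrFun this i
  rw [← hi]
  simp only [Matrix.mulVec, dotProduct, hM]
  exact Finset.sum_congr rfl (fun j _ => (mul_comm _ _))
end

section
/- Let σ : ℝ → ℝ be rectified and let x_1, ..., x_d ∈ ℝ^p be distinct, y_i ∈ ℝ^ℓ arbitrary vectors. Then there exist parameters of a one-hidden-layer network of width ℓ·d with activation σ (i.e., a ∈ ℝ^p, biases b ∈ ℝ^{ℓd}, and an output matrix M ∈ ℝ^{ℓ×ℓd}) computing f(x) = M σ(x·a·𝟙 − b) with f(x_i) = y_i for all i. -/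
open Polynomial in
lemma exists_sep {p d : ℕ} (x : Fin d → Fin p → ℝ) (hx : Function.Injective x) :
    ∃ a : Fin p → ℝ, Function.Injective fun i => dotProduct a (x i) := by
  set P : Fin d → Fin d → ℝ[X] := fun i j => ∑ k, C (x i k - x j k) * X ^ ((k : ℕ) + 1) with hP
  have hPne : ∀ i j, i ≠ j → P i j ≠ 0 := by
    intro i j hij
    have : x i ≠ x j := fun h => hij (hx h)
    obtain ⟨k, hk⟩ : ∃ k, x i k ≠ x j k := by
      by_contra h; push_neg at h; exact this (funext h)
    intro h0
    have hc : (P i j).coeff ((k : ℕ) + 1) = x i k - x j k := by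
      rw [hP]
      rw [finset_sum_coeff]
      rw [Finset.sum_eq_single k]
      · simp [sub_mul, coeff_X_pow]
      · intro b _ hb
        have h2 : (k : ℕ) ≠ (b : ℕ) := fun h => hb (Fin.val_injective h).symm
        simp [sub_mul, coeff_X_pow, h2]
      · simp
    rw [h0] at hc
    simp at hc
    exact hk (by linarith [sub_eq_zero.mp hc.symm])
  have hfin : (⋃ i, ⋃ j, {s : ℝ | i ≠ j ∧ (P i j).IsRoot s}).Finite := by
    apply Set.finite_iUnion; intro i
    apply Set.finite_iUnion; intro j
    by_cases hij : i = j
    · simp [hij]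
    · exact Set.Finite.subset (finite_setOf_isRoot (hPne i j hij)) (fun s hs => hs.2)
  obtain ⟨s, hs⟩ := (Set.Finite.infinite_compl hfin).nonempty
  refine ⟨fun k => s ^ ((k : ℕ) + 1), ?_⟩
  intro i j hij
  by_contra hne
  apply hs
  refine Set.mem_iUnion.mpr ⟨i, Set.mem_iUnion.mpr ⟨j, hne, ?_⟩⟩
  show (P i j).eval s = 0
  simp only [hP, eval_finset_sum, eval_mul, eval_C, eval_pow, eval_X]
  simp only [dotProduct] at hij
  simp only [sub_mul, Finset.sum_sub_distrib, sub_eq_zero]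
  simpa [mul_comm] using hij

theorem stmt_17 (d p ℓ : ℕ) (σ : ℝ → ℝ) (hσcont : Continuous σ)
    (hσ0 : ∀ x : ℝ, x ≤ 0 → σ x = 0)
    (hσmono : StrictMonoOn σ (Set.Ioi 0))
    (hσpos : ∀ x : ℝ, 0 < x → 0 < σ x)
    (x : Fin d → (Fin p → ℝ)) (hx : Function.Injective x)
    (y : Fin d → (Fin ℓ → ℝ)) :
    ∃ (a : Fin p → ℝ) (b : Fin ℓ × Fin d → ℝ)
      (M : Matrix (Fin ℓ) (Fin ℓ × Fin d) ℝ),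
      ∀ (i : Fin d) (k : Fin ℓ),
        ∑ u : Fin ℓ × Fin d, M k u * σ (dotProduct a (x i) - b u) = y i k := by
  obtain ⟨a, ha⟩ := exists_sep x hx
  set t : Fin d → ℝ := fun i => dotProduct a (x i) with ht
  set e : Equiv.Perm (Fin d) := Tuple.sort t with he
  have hsm : StrictMono (t ∘ e) :=
    (Tuple.monotone_sort t).strictMono_of_injective (ha.comp e.injective)
  set s : Fin d → ℝ := t ∘ e with hsdef
  set b' : Fin d → ℝ := fun j =>
    if h : (j : ℕ) = 0 then s j - 1
    else (s ⟨(j : ℕ) - 1, Nat.lt_of_le_of_lt (Nat.sub_le _ _) j.isLt⟩ + s j) / 2 with hb'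
  have hb1 : ∀ j, b' j < s j := by
    intro j
    rw [hb']
    by_cases h : (j : ℕ) = 0
    · simp [h]
    · have hlt : (⟨(j : ℕ) - 1, Nat.lt_of_le_of_lt (Nat.sub_le _ _) j.isLt⟩ : Fin d) < j := by
        simp [Fin.lt_def]; omega
      have := hsm hlt
      simp [h]
      linarith
  have hb2 : ∀ i j : Fin d, i < j → s i ≤ b' j := by
    intro i j hij
    have h : (j : ℕ) ≠ 0 := by
      have := Fin.lt_def.mp hij; omega
    have hle : i ≤ (⟨(j : ℕ) - 1, Nat.lt_of_le_of_lt (Nat.sub_le _ _) j.isLt⟩ : Fin d) := by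
      simp [Fin.le_def]; have := Fin.lt_def.mp hij; omega
    have h1 : s i ≤ s ⟨(j : ℕ) - 1, Nat.lt_of_le_of_lt (Nat.sub_le _ _) j.isLt⟩ :=
      hsm.monotone hle
    have hlt : (⟨(j : ℕ) - 1, Nat.lt_of_le_of_lt (Nat.sub_le _ _) j.isLt⟩ : Fin d) < j := by
      simp [Fin.lt_def]; omega
    have h2 := hsm hlt
    rw [hb']
    simp [h]
    linarith
  set A : Matrix (Fin d) (Fin d) ℝ := Matrix.of fun i j => σ (s i - b' j) with hA
  have htri : A.BlockTriangular OrderDual.toDual := by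
    intro i j hij
    have hij' : i < j := hij
    have : s i - b' j ≤ 0 := by linarith [hb2 i j hij']
    simpa [hA] using hσ0 _ this
  have hdet : A.det = ∏ j, σ (s j - b' j) := by
    rw [Matrix.det_of_lowerTriangular A htri]; rfl
  have hdetpos : 0 < A.det := by
    rw [hdet]
    exact Finset.prod_pos fun j _ => hσpos _ (by linarith [hb1 j])
  have hunit : IsUnit A.det := isUnit_iff_ne_zero.mpr (ne_of_gt hdetpos)
  set c : Fin ℓ → Fin d → ℝ := fun k => A⁻¹.mulVec (fun j => y (e j) k) with hc
  have hsolve : ∀ k, A.mulVec (c k) = fun j => y (e j) k := by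
    intro k
    show A.mulVec (A⁻¹.mulVec fun j => y (e j) k) = _
    rw [Matrix.mulVec_mulVec, Matrix.mul_nonsing_inv _ hunit, Matrix.one_mulVec]
  refine ⟨a, fun u => b' u.2, Matrix.of fun k u => if u.1 = k then c k u.2 else 0, ?_⟩
  intro i k
  rw [Fintype.sum_prod_type]
  have hcollapse : ∀ j : Fin d,
      (∑ k' : Fin ℓ, (Matrix.of fun k u => if u.1 = k then c k u.2 else 0) k (k', j)
        * σ (dotProduct a (x i) - b' j)) = c k j * σ (t i - b' j) := by
    intro j
    simp only [Matrix.of_apply, ite_mul, zero_mul]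
    rw [Finset.sum_ite_eq' Finset.univ k
      (fun _ => c k j * σ (dotProduct a (x i) - b' j))]
    simp only [Finset.mem_univ, if_true]
    rfl
  calc (∑ k' : Fin ℓ, ∑ j : Fin d,
          (Matrix.of fun k u => if u.1 = k then c k u.2 else 0) k (k', j)
            * σ (dotProduct a (x i) - (fun u : Fin ℓ × Fin d => b' u.2) (k', j)))
      = ∑ j : Fin d, c k j * σ (t i - b' j) := by
        rw [Finset.sum_comm]
        exact Finset.sum_congr rfl fun j _ => hcollapse j
    _ = (A.mulVec (c k)) (e.symm i) := by
        simp only [Matrix.mulVec, dotProduct, hA, Matrix.of_apply]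
        refine Finset.sum_congr rfl fun j _ => ?_
        rw [mul_comm]
        have hsi : s (e.symm i) = t i := congrArg t (e.apply_symm_apply i)
        rw [hsi]
    _ = y i k := by rw [hsolve k]; simp
end
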